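/- The Hilbert distance on the open unit disk is a metric: for distinct points x, y in the open unit disk D², let a, b be the two intersection points of the line through x and y with the unit circle, ordered so that a, x, y, b appear in this order; then d_H(x,y) := -(1/2) log [x,y;a,b] is positive, symmetric, and satisfies the triangle inequality on D². -/

import Mathlib

open scoped RealInnerProductSpace

abbrev E2 := EuclideanSpace ℝ (Fin 2)

lemma quad_roots (A B C : ℝ) (hA : 0 < A) (hC : C < 0) (h1 : A + 2 * B + C < 0) :
    ∃ s1 s2 : ℝ, s1 < 0 ∧ 1 < s2 ∧ A * s1 ^ 2 + 2 * B * s1 + C = 0 ∧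
      A * s2 ^ 2 + 2 * B * s2 + C = 0 := by
  have hAne : A ≠ 0 := ne_of_gt hA
  set D : ℝ := B ^ 2 - A * C with hD_def
  have hD : B ^ 2 < D := by nlinarith
  have hDpos : 0 < D := lt_of_le_of_lt (sq_nonneg B) hD
  have hsq : Real.sqrt D ^ 2 = D := Real.sq_sqrt hDpos.le
  have hsnn : 0 ≤ Real.sqrt D := Real.sqrt_nonneg D
  have hspos : 0 < Real.sqrt D := Real.sqrt_pos.mpr hDpos
  refine ⟨(-B - Real.sqrt D) / A, (-B + Real.sqrt D) / A, ?_, ?_, ?_, ?_⟩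
  · apply div_neg_of_neg_of_pos _ hA
    nlinarith
  · rw [lt_div_iff₀ hA]
    rcases le_or_gt (A + B) 0 with h | h
    · nlinarith
    · nlinarith
  · have e1 : A * ((-B - Real.sqrt D) / A) = -B - Real.sqrt D := by field_simp
    have e3 : A * (A * ((-B - Real.sqrt D) / A) ^ 2 + 2 * B * ((-B - Real.sqrt D) / A) + C) = 0 := by
      have e2 : (A * ((-B - Real.sqrt D) / A)) ^ 2 + 2 * B * (A * ((-B - Real.sqrt D) / A))
          + A * C = 0 := by
        rw [e1]; linear_combination hsq
      linear_combination e2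
    exact (mul_eq_zero.mp e3).resolve_left hAne
  · have e1 : A * ((-B + Real.sqrt D) / A) = -B + Real.sqrt D := by field_simp
    have e3 : A * (A * ((-B + Real.sqrt D) / A) ^ 2 + 2 * B * ((-B + Real.sqrt D) / A) + C) = 0 := by
      have e2 : (A * ((-B + Real.sqrt D) / A)) ^ 2 + 2 * B * (A * ((-B + Real.sqrt D) / A))
          + A * C = 0 := by
        rw [e1]; linear_combination hsq
      linear_combination e2
    exact (mul_eq_zero.mp e3).resolve_left hAne

lemma exists_chord (x y : E2) (hx : ‖x‖ < 1) (hy : ‖y‖ < 1) (hxy : x ≠ y) :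
    ∃ a b : E2, ∃ t u : ℝ, ‖a‖ = 1 ∧ ‖b‖ = 1 ∧ 0 < t ∧ t < u ∧ u < 1 ∧
      x = a + t • (b - a) ∧ y = a + u • (b - a) := by
  have hv : y - x ≠ 0 := sub_ne_zero.mpr (Ne.symm hxy)
  have hA : 0 < ‖y - x‖ ^ 2 := pow_pos (norm_pos_iff.mpr hv) 2
  have hC : ‖x‖ ^ 2 - 1 < 0 := by nlinarith [norm_nonneg x]
  have hsum : ‖y - x‖ ^ 2 + 2 * ⟪x, y - x⟫ + (‖x‖ ^ 2 - 1) < 0 := by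
    have h1 : ‖x + (1:ℝ) • (y - x)‖ = ‖y‖ := by
      congr 1
      module
    have h2 : ‖x + (1:ℝ) • (y - x)‖ ^ 2
        = ‖x‖ ^ 2 + 2 * ⟪x, y - x⟫ + ‖y - x‖ ^ 2 := by
      rw [norm_add_sq_real, real_inner_smul_right, norm_smul]
      norm_num
    rw [h1] at h2
    nlinarith [norm_nonneg y]
  obtain ⟨s1, s2, hs1, hs2, hr1, hr2⟩ :=
    quad_roots (‖y - x‖ ^ 2) (⟪x, y - x⟫) (‖x‖ ^ 2 - 1) hA hC (by linarith)
  have hroot : ∀ s : ℝ, ‖y - x‖ ^ 2 * s ^ 2 + 2 * ⟪x, y - x⟫ * s + (‖x‖ ^ 2 - 1) = 0 →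
      ‖x + s • (y - x)‖ = 1 := by
    intro s hs
    have hn : ‖x + s • (y - x)‖ ^ 2 = 1 := by
      rw [norm_add_sq_real, real_inner_smul_right, norm_smul, Real.norm_eq_abs]
      nlinarith [sq_abs s]
    nlinarith [norm_nonneg (x + s • (y - x))]
  have hs12 : s1 < s2 := by linarith
  have hd : (0:ℝ) < s2 - s1 := by linarith
  refine ⟨x + s1 • (y - x), x + s2 • (y - x), -s1 / (s2 - s1), (1 - s1) / (s2 - s1),
    hroot s1 (by linarith [hr1]), hroot s2 (by linarith [hr2]), ?_, ?_, ?_, ?_, ?_⟩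
  · exact div_pos (by linarith) hd
  · rw [div_lt_div_iff₀ hd hd]; nlinarith
  · rw [div_lt_one hd]; linarith
  · have hba : (x + s2 • (y - x)) - (x + s1 • (y - x)) = (s2 - s1) • (y - x) := by module
    rw [hba, smul_smul, div_mul_cancel₀ _ (ne_of_gt hd)]
    module
  · have hba : (x + s2 • (y - x)) - (x + s1 • (y - x)) = (s2 - s1) • (y - x) := by module
    rw [hba, smul_smul, div_mul_cancel₀ _ (ne_of_gt hd)]
    module


lemma d_eq (d : E2 → E2 → ℝ)
    (hcr : ∀ x y a b : E2, x ∈ Metric.ball (0 : E2) 1 → y ∈ Metric.ball (0 : E2) 1 →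
      x ≠ y → ‖a‖ = 1 → ‖b‖ = 1 →
      (∃ t u : ℝ, 0 < t ∧ t < u ∧ u < 1 ∧ x = a + t • (b - a) ∧ y = a + u • (b - a)) →
      d x y = -(1 / 2) * Real.log ((dist x a * dist y b) / (dist y a * dist x b)))
    (x y a b : E2) (t u : ℝ) (hx : ‖x‖ < 1) (hy : ‖y‖ < 1) (hxy : x ≠ y)
    (ha : ‖a‖ = 1) (hb : ‖b‖ = 1) (ht : 0 < t) (htu : t < u) (hu : u < 1)
    (hxa : x = a + t • (b - a)) (hya : y = a + u • (b - a)) :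
    d x y = (1 / 2) * Real.log (u * (1 - t) / (t * (1 - u))) := by
  have h := hcr x y a b (by simpa [Metric.mem_ball] using hx) (by simpa [Metric.mem_ball] using hy)
    hxy ha hb ⟨t, u, ht, htu, hu, hxa, hya⟩
  have hw : b - a ≠ 0 := by
    intro hba
    exact hxy (by rw [hxa, hya, hba, smul_zero, smul_zero])
  have hwpos : 0 < ‖b - a‖ := norm_pos_iff.mpr hw
  have d1 : dist x a = t * ‖b - a‖ := by
    rw [dist_eq_norm, hxa, add_sub_cancel_left, norm_smul, Real.norm_eq_abs, abs_of_pos ht]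
  have d2 : dist y b = (1 - u) * ‖b - a‖ := by
    have e : a + u • (b - a) - b = -((1 - u) • (b - a)) := by module
    rw [dist_eq_norm, hya, e, norm_neg, norm_smul, Real.norm_eq_abs, abs_of_pos (by linarith)]
  have d3 : dist y a = u * ‖b - a‖ := by
    rw [dist_eq_norm, hya, add_sub_cancel_left, norm_smul, Real.norm_eq_abs,
      abs_of_pos (by linarith)]
  have d4 : dist x b = (1 - t) * ‖b - a‖ := by
    have e : a + t • (b - a) - b = -((1 - t) • (b - a)) := by module
    rw [dist_eq_norm, hxa, e, norm_neg, norm_smul, Real.norm_eq_abs, abs_of_pos (by linarith)]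
  rw [h, d1, d2, d3, d4]
  have harg : t * ‖b - a‖ * ((1 - u) * ‖b - a‖) / (u * ‖b - a‖ * ((1 - t) * ‖b - a‖))
      = t * (1 - u) / (u * (1 - t)) := by
    have h1 : ‖b - a‖ ≠ 0 := ne_of_gt hwpos
    have h2 : u ≠ 0 := by intro h; rw [h] at htu; linarith
    have h3 : (1 - t) ≠ 0 := by intro h; nlinarith
    field_simp
  rw [harg, show t * (1 - u) / (u * (1 - t)) = (u * (1 - t) / (t * (1 - u)))⁻¹ by
    rw [inv_div], Real.log_inv]
  ring

lemma cosh_formula (x y a b : E2) (t u : ℝ)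
    (ha : ‖a‖ = 1) (hb : ‖b‖ = 1) (ht : 0 < t) (htu : t < u) (hu : u < 1)
    (hw : b - a ≠ 0) (hxa : x = a + t • (b - a)) (hya : y = a + u • (b - a)) :
    Real.cosh ((1 / 2) * Real.log (u * (1 - t) / (t * (1 - u))))
      = (1 - ⟪x, y⟫) / Real.sqrt ((1 - ‖x‖ ^ 2) * (1 - ‖y‖ ^ 2)) := by
  have h1u : 0 < 1 - u := by linarith
  have h1t : 0 < 1 - t := by linarith
  have hu0 : 0 < u := by linarith
  have hwpos : 0 < ‖b - a‖ := norm_pos_iff.mpr hw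
  have hW : 0 < ‖b - a‖ ^ 2 := by positivity
  have ha2 : ‖a‖ ^ 2 = 1 := by rw [ha]; norm_num
  have haw : ⟪a, b - a⟫ = -(‖b - a‖ ^ 2) / 2 := by
    have hb2 : ‖a + (b - a)‖ ^ 2 = 1 := by
      rw [show a + (b - a) = b by module, hb]; norm_num
    rw [norm_add_sq_real, ha2] at hb2
    linarith
  have hx2 : ‖x‖ ^ 2 = 1 - t * (1 - t) * ‖b - a‖ ^ 2 := by
    rw [hxa, norm_add_sq_real, real_inner_smul_right, haw, ha2, norm_smul, Real.norm_eq_abs,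
      abs_of_pos ht, mul_pow]
    ring
  have hy2 : ‖y‖ ^ 2 = 1 - u * (1 - u) * ‖b - a‖ ^ 2 := by
    rw [hya, norm_add_sq_real, real_inner_smul_right, haw, ha2, norm_smul, Real.norm_eq_abs,
      abs_of_pos hu0, mul_pow]
    ring
  have hip : ⟪x, y⟫ = 1 - ((t + u) / 2 - t * u) * ‖b - a‖ ^ 2 := by
    rw [hxa, hya]
    have hwa : ⟪b - a, a⟫ = -‖b - a‖ ^ 2 / 2 := by rw [real_inner_comm]; exact haw
    simp only [inner_add_left, inner_add_right, real_inner_smul_left, real_inner_smul_right,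
      hwa, haw, real_inner_self_eq_norm_sq, ha2]
    ring
  have hR : 0 < u * (1 - t) / (t * (1 - u)) := by positivity
  have hsR : 0 < Real.sqrt (u * (1 - t) / (t * (1 - u))) := Real.sqrt_pos.mpr hR
  -- LHS
  have lhs_eq : Real.cosh ((1 / 2) * Real.log (u * (1 - t) / (t * (1 - u))))
      = (Real.sqrt (u * (1 - t) / (t * (1 - u)))
        + (Real.sqrt (u * (1 - t) / (t * (1 - u))))⁻¹) / 2 := by
    rw [show (1 / 2) * Real.log (u * (1 - t) / (t * (1 - u)))
        = Real.log (Real.sqrt (u * (1 - t) / (t * (1 - u)))) by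
      rw [Real.log_sqrt hR.le]; ring]
    rw [Real.cosh_eq, Real.exp_log hsR, Real.exp_neg, Real.exp_log hsR]
  rw [lhs_eq]
  -- RHS simplification
  have hprod : (1 - ‖x‖ ^ 2) * (1 - ‖y‖ ^ 2)
      = (t * (1 - t) * u * (1 - u)) * (‖b - a‖ ^ 2) ^ 2 := by
    rw [hx2, hy2]; ring
  have hsprod : Real.sqrt ((1 - ‖x‖ ^ 2) * (1 - ‖y‖ ^ 2))
      = Real.sqrt (t * (1 - t) * u * (1 - u)) * ‖b - a‖ ^ 2 := by
    rw [hprod, Real.sqrt_mul (by positivity), Real.sqrt_sq hW.le]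
  rw [hsprod, hip]
  have hnum : 1 - (1 - ((t + u) / 2 - t * u) * ‖b - a‖ ^ 2)
      = ((t + u) / 2 - t * u) * ‖b - a‖ ^ 2 := by ring
  rw [hnum]
  rw [mul_comm (Real.sqrt (t * (1 - t) * u * (1 - u))) (‖b - a‖ ^ 2),
    mul_comm (((t + u) / 2 - t * u)) (‖b - a‖ ^ 2), mul_div_mul_left _ _ (ne_of_gt hW)]
  -- now pure t u identity
  have hα : Real.sqrt (t * (1 - u)) ^ 2 = t * (1 - u) := Real.sq_sqrt (by positivity)
  have hβ : Real.sqrt (u * (1 - t)) ^ 2 = u * (1 - t) := Real.sq_sqrt (by positivity)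
  have hαpos : 0 < Real.sqrt (t * (1 - u)) := Real.sqrt_pos.mpr (by positivity)
  have hβpos : 0 < Real.sqrt (u * (1 - t)) := Real.sqrt_pos.mpr (by positivity)
  have hsplit : Real.sqrt (u * (1 - t) / (t * (1 - u)))
      = Real.sqrt (u * (1 - t)) / Real.sqrt (t * (1 - u)) :=
    Real.sqrt_div (by positivity) _
  have hsplit2 : Real.sqrt (t * (1 - t) * u * (1 - u))
      = Real.sqrt (t * (1 - u)) * Real.sqrt (u * (1 - t)) := by
    rw [show t * (1 - t) * u * (1 - u) = (t * (1 - u)) * (u * (1 - t)) by ring,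
      Real.sqrt_mul (by positivity)]
  rw [hsplit, hsplit2]
  have ht2 : Real.sqrt t ^ 2 = t := Real.sq_sqrt ht.le
  have hu2 : Real.sqrt u ^ 2 = u := Real.sq_sqrt hu0.le
  have h1t2 : Real.sqrt (1 - t) ^ 2 = 1 - t := Real.sq_sqrt h1t.le
  have h1u2 : Real.sqrt (1 - u) ^ 2 = 1 - u := Real.sq_sqrt h1u.le
  field_simp
  linear_combination hα + hβ



lemma gram_nonneg (x y z : E2) :
    0 ≤ (1 - ‖x‖ ^ 2) * (1 - ‖y‖ ^ 2) * (1 - ‖z‖ ^ 2)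
      + 2 * (1 - ⟪x, y⟫) * (1 - ⟪x, z⟫) * (1 - ⟪y, z⟫)
      - (1 - ⟪x, y⟫) ^ 2 * (1 - ‖z‖ ^ 2)
      - (1 - ⟪x, z⟫) ^ 2 * (1 - ‖y‖ ^ 2)
      - (1 - ⟪y, z⟫) ^ 2 * (1 - ‖x‖ ^ 2) := by
  have e : (1 - ‖x‖ ^ 2) * (1 - ‖y‖ ^ 2) * (1 - ‖z‖ ^ 2)
      + 2 * (1 - ⟪x, y⟫) * (1 - ⟪x, z⟫) * (1 - ⟪y, z⟫)
      - (1 - ⟪x, y⟫) ^ 2 * (1 - ‖z‖ ^ 2)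
      - (1 - ⟪x, z⟫) ^ 2 * (1 - ‖y‖ ^ 2)
      - (1 - ⟪y, z⟫) ^ 2 * (1 - ‖x‖ ^ 2)
      = ((y 0 - x 0) * (z 1 - x 1) - (y 1 - x 1) * (z 0 - x 0)) ^ 2 := by
    have hn : ∀ w : E2, ‖w‖ ^ 2 = w 0 * w 0 + w 1 * w 1 := by
      intro w
      rw [← real_inner_self_eq_norm_sq, PiLp.inner_apply, Fin.sum_univ_two]
      simp [RCLike.inner_apply, conj_trivial]
      ring
    have hi : ∀ v w : E2, ⟪v, w⟫ = v 0 * w 0 + v 1 * w 1 := by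
      intro v w
      rw [PiLp.inner_apply, Fin.sum_univ_two]
      simp [RCLike.inner_apply, conj_trivial]
      ring
    rw [hn x, hn y, hn z, hi x y, hi x z, hi y z]
    ring
  rw [e]
  positivity

lemma key_ineq (gxy gxz gyz sxy syz : ℝ) (hsxy : 0 ≤ sxy) (hsyz : 0 ≤ syz)
    (h1 : sxy ^ 2 = gxy ^ 2 - 1) (h2 : syz ^ 2 = gyz ^ 2 - 1)
    (hgram : (gxy ^ 2 - 1) * (gyz ^ 2 - 1) ≥ (gxz - gxy * gyz) ^ 2) :
    gxz ≤ gxy * gyz + sxy * syz := by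
  rcases le_or_gt (gxz - gxy * gyz) 0 with h | h
  · nlinarith [mul_nonneg hsxy hsyz]
  · nlinarith [mul_nonneg hsxy hsyz]





lemma he_real (sp sq sr al be ga : ℝ) (hsp : sp ≠ 0) (hsq : sq ≠ 0) (hsr : sr ≠ 0) :
    ((al / (sp * sq)) ^ 2 - 1) * ((ga / (sq * sr)) ^ 2 - 1)
      - (be / (sp * sr) - (al / (sp * sq)) * (ga / (sq * sr))) ^ 2
    = (sp ^ 2 * sq ^ 2 * sr ^ 2 + 2 * al * be * ga - al ^ 2 * sr ^ 2 - be ^ 2 * sq ^ 2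
        - ga ^ 2 * sp ^ 2) / (sp ^ 2 * sq ^ 2 * sr ^ 2) := by
  field_simp
  ring

noncomputable def gf (x y : E2) : ℝ := (1 - ⟪x, y⟫) / Real.sqrt ((1 - ‖x‖ ^ 2) * (1 - ‖y‖ ^ 2))

lemma gram_ineq (x y z : E2) (hx : ‖x‖ < 1) (hy : ‖y‖ < 1) (hz : ‖z‖ < 1) :
    (gf x y ^ 2 - 1) * (gf y z ^ 2 - 1) ≥ (gf x z - gf x y * gf y z) ^ 2 := by
  have hp : 0 < 1 - ‖x‖ ^ 2 := by nlinarith [norm_nonneg x]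
  have hq : 0 < 1 - ‖y‖ ^ 2 := by nlinarith [norm_nonneg y]
  have hr : 0 < 1 - ‖z‖ ^ 2 := by nlinarith [norm_nonneg z]
  have hsp2 : Real.sqrt (1 - ‖x‖ ^ 2) ^ 2 = 1 - ‖x‖ ^ 2 := Real.sq_sqrt hp.le
  have hsq2 : Real.sqrt (1 - ‖y‖ ^ 2) ^ 2 = 1 - ‖y‖ ^ 2 := Real.sq_sqrt hq.le
  have hsr2 : Real.sqrt (1 - ‖z‖ ^ 2) ^ 2 = 1 - ‖z‖ ^ 2 := Real.sq_sqrt hr.le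
  have hsp : 0 < Real.sqrt (1 - ‖x‖ ^ 2) := Real.sqrt_pos.mpr hp
  have hsq : 0 < Real.sqrt (1 - ‖y‖ ^ 2) := Real.sqrt_pos.mpr hq
  have hsr : 0 < Real.sqrt (1 - ‖z‖ ^ 2) := Real.sqrt_pos.mpr hr
  have hgxy : gf x y = (1 - ⟪x, y⟫) / (Real.sqrt (1 - ‖x‖ ^ 2) * Real.sqrt (1 - ‖y‖ ^ 2)) := by
    rw [gf, Real.sqrt_mul hp.le]
  have hgxz : gf x z = (1 - ⟪x, z⟫) / (Real.sqrt (1 - ‖x‖ ^ 2) * Real.sqrt (1 - ‖z‖ ^ 2)) := by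
    rw [gf, Real.sqrt_mul hp.le]
  have hgyz : gf y z = (1 - ⟪y, z⟫) / (Real.sqrt (1 - ‖y‖ ^ 2) * Real.sqrt (1 - ‖z‖ ^ 2)) := by
    rw [gf, Real.sqrt_mul hq.le]
  have hN : 0 ≤ Real.sqrt (1 - ‖x‖ ^ 2) ^ 2 * Real.sqrt (1 - ‖y‖ ^ 2) ^ 2
        * Real.sqrt (1 - ‖z‖ ^ 2) ^ 2
      + 2 * (1 - ⟪x, y⟫) * (1 - ⟪x, z⟫) * (1 - ⟪y, z⟫)
      - (1 - ⟪x, y⟫) ^ 2 * Real.sqrt (1 - ‖z‖ ^ 2) ^ 2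
      - (1 - ⟪x, z⟫) ^ 2 * Real.sqrt (1 - ‖y‖ ^ 2) ^ 2
      - (1 - ⟪y, z⟫) ^ 2 * Real.sqrt (1 - ‖x‖ ^ 2) ^ 2 := by
    rw [hsp2, hsq2, hsr2]
    exact gram_nonneg x y z
  have he : (gf x y ^ 2 - 1) * (gf y z ^ 2 - 1) - (gf x z - gf x y * gf y z) ^ 2
      = (Real.sqrt (1 - ‖x‖ ^ 2) ^ 2 * Real.sqrt (1 - ‖y‖ ^ 2) ^ 2
          * Real.sqrt (1 - ‖z‖ ^ 2) ^ 2
        + 2 * (1 - ⟪x, y⟫) * (1 - ⟪x, z⟫) * (1 - ⟪y, z⟫)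
        - (1 - ⟪x, y⟫) ^ 2 * Real.sqrt (1 - ‖z‖ ^ 2) ^ 2
        - (1 - ⟪x, z⟫) ^ 2 * Real.sqrt (1 - ‖y‖ ^ 2) ^ 2
        - (1 - ⟪y, z⟫) ^ 2 * Real.sqrt (1 - ‖x‖ ^ 2) ^ 2)
        / (Real.sqrt (1 - ‖x‖ ^ 2) ^ 2 * Real.sqrt (1 - ‖y‖ ^ 2) ^ 2
          * Real.sqrt (1 - ‖z‖ ^ 2) ^ 2) := by
    rw [hgxy, hgxz, hgyz]
    exact he_real _ _ _ _ _ _ (ne_of_gt hsp) (ne_of_gt hsq) (ne_of_gt hsr)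
  rw [ge_iff_le, ← sub_nonneg, he]
  exact div_nonneg hN (by positivity)

/-- The Hilbert distance on the open unit disk is a metric: if `d` is a function which
vanishes on the diagonal and which, for distinct points `x, y` of the open unit disk,
is given by `-(1/2) log [x,y;a,b]` where `a, b` are the intersections of the line
through `x` and `y` with the unit circle, ordered so that `a, x, y, b` appear in this
order, then `d` is positive on distinct points, symmetric, and satisfies the triangle
inequality on the open disk. -/
theorem stmt_1 (d : E2 → E2 → ℝ)
    (h0 : ∀ x : E2, d x x = 0)
    (hcr : ∀ x y a b : E2, x ∈ Metric.ball (0 : E2) 1 → y ∈ Metric.ball (0 : E2) 1 →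
      x ≠ y → ‖a‖ = 1 → ‖b‖ = 1 →
      (∃ t u : ℝ, 0 < t ∧ t < u ∧ u < 1 ∧ x = a + t • (b - a) ∧ y = a + u • (b - a)) →
      d x y = -(1 / 2) * Real.log ((dist x a * dist y b) / (dist y a * dist x b))) :
    (∀ x ∈ Metric.ball (0 : E2) 1, ∀ y ∈ Metric.ball (0 : E2) 1, x ≠ y → 0 < d x y) ∧
    (∀ x ∈ Metric.ball (0 : E2) 1, ∀ y ∈ Metric.ball (0 : E2) 1, d x y = d y x) ∧
    (∀ x ∈ Metric.ball (0 : E2) 1, ∀ y ∈ Metric.ball (0 : E2) 1,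
      ∀ z ∈ Metric.ball (0 : E2) 1, d x z ≤ d x y + d y z) := by
  have hmain : ∀ x y : E2, ‖x‖ < 1 → ‖y‖ < 1 → x ≠ y →
      0 < d x y ∧ Real.cosh (d x y) = gf x y := by
    intro x y hx hy hxy
    obtain ⟨a, b, t, u, ha, hb, ht, htu, hu, hxa, hya⟩ := exists_chord x y hx hy hxy
    have hd := d_eq d hcr x y a b t u hx hy hxy ha hb ht htu hu hxa hya
    have hw : b - a ≠ 0 := by
      intro hba; exact hxy (by rw [hxa, hya, hba, smul_zero, smul_zero])
    have hcosh := cosh_formula x y a b t u ha hb ht htu hu hw hxa hya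
    constructor
    · rw [hd]
      have hR1 : 1 < u * (1 - t) / (t * (1 - u)) := by
        rw [lt_div_iff₀ (by nlinarith)]
        nlinarith
      have := Real.log_pos hR1
      linarith
    · rw [hd, hcosh, gf]
  have hnn : ∀ x y : E2, ‖x‖ < 1 → ‖y‖ < 1 → 0 ≤ d x y := by
    intro x y hx hy
    rcases eq_or_ne x y with rfl | h
    · rw [h0]
    · exact (hmain x y hx hy h).1.le
  refine ⟨?_, ?_, ?_⟩
  · intro x hx y hy hxy
    exact (hmain x y (mem_ball_zero_iff.mp hx) (mem_ball_zero_iff.mp hy) hxy).1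
  · intro x hx y hy
    have hx' := mem_ball_zero_iff.mp hx
    have hy' := mem_ball_zero_iff.mp hy
    rcases eq_or_ne x y with rfl | h
    · rfl
    · obtain ⟨a, b, t, u, ha, hb, ht, htu, hu, hxa, hya⟩ := exists_chord x y hx' hy' h
      have hd1 := d_eq d hcr x y a b t u hx' hy' h ha hb ht htu hu hxa hya
      have hd2 := d_eq d hcr y x b a (1 - u) (1 - t) hy' hx' h.symm hb ha (by linarith)
        (by linarith) (by linarith) (by rw [hya]; module) (by rw [hxa]; module)
      rw [hd1, hd2]
      congr 1
      rw [show (1:ℝ) - (1 - u) = u by ring, show (1:ℝ) - (1 - t) = t by ring]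
      ring_nf
  · intro x hx y hy z hz
    have hx' := mem_ball_zero_iff.mp hx
    have hy' := mem_ball_zero_iff.mp hy
    have hz' := mem_ball_zero_iff.mp hz
    rcases eq_or_ne x z with rfl | hxz
    · rw [h0]
      exact add_nonneg (hnn x y hx' hy') (hnn y x hy' hx')
    rcases eq_or_ne x y with rfl | hxy
    · rw [h0]
      linarith [hnn x z hx' hz']
    rcases eq_or_ne y z with rfl | hyz
    · rw [h0]
      linarith [hnn x y hx' hy']
    obtain ⟨hp12, hc12⟩ := hmain x y hx' hy' hxy
    obtain ⟨hp23, hc23⟩ := hmain y z hy' hz' hyz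
    obtain ⟨hp13, hc13⟩ := hmain x z hx' hz' hxz
    have h1 : Real.sinh (d x y) ^ 2 = gf x y ^ 2 - 1 := by
      have := Real.cosh_sq (d x y)
      rw [hc12] at this
      linarith
    have h2 : Real.sinh (d y z) ^ 2 = gf y z ^ 2 - 1 := by
      have := Real.cosh_sq (d y z)
      rw [hc23] at this
      linarith
    have hstep : Real.cosh (d x z) ≤ Real.cosh (d x y + d y z) := by
      rw [Real.cosh_add, hc13, hc12, hc23]
      exact key_ineq (gf x y) (gf x z) (gf y z) (Real.sinh (d x y)) (Real.sinh (d y z))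
        (Real.sinh_nonneg_iff.mpr hp12.le) (Real.sinh_nonneg_iff.mpr hp23.le)
        h1 h2 (gram_ineq x y z hx' hy' hz')
    have habs := Real.cosh_le_cosh.mp hstep
    rw [abs_of_pos hp13, abs_of_pos (by linarith)] at habs
    exact habs
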